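/- arXiv:2004.14780 — 4 statements merged into one kernel-verified Lean document; each statement's English description precedes it below -/
import Mathlib

section
/- Let (S,E,I,R) be a C¹ solution on [0,∞) of the modified SEIR system S' = -βᵢIS - βₑES, E' = βᵢIS + βₑES - aE, I' = aE - (γ+μ)I, R' = γI, with βᵢ, βₑ, a, γ, μ nonnegative continuous functions and nonnegative initial data. Then S(t), E(t), I(t), R(t) are nonnegative for all t ≥ 0. -/
open Real Set Filter Topology

set_option maxHeartbeats 1000000

private lemma seir_mul_aux {x y M c : ℝ} (hx : -c ≤ x) (hy : -c ≤ y) (hxM : x ≤ M)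
    (hyM : y ≤ M) (hc : 0 ≤ c) (hM : 0 ≤ M) : -(M * c) ≤ x * y := by
  rcases le_or_gt 0 x with h | h
  · nlinarith
  · nlinarith

private lemma seir_arith_S {p q av Sc Ec Ic Ac M L : ℝ} (hp : 0 ≤ p) (hq : 0 ≤ q)
    (hav : 0 ≤ av) (hAc : 0 < Ac) (hSval : Sc = -Ac)
    (hE : |Ec| ≤ M) (hI : |Ic| ≤ M) (hL : (p + q) * M + av + 1 ≤ L) :
    0 < -(p * Ic * Sc) - q * Ec * Sc + L * Ac := by
  subst hSval
  obtain ⟨hE1, hE2⟩ := abs_le.1 hE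
  obtain ⟨hI1, hI2⟩ := abs_le.1 hI
  nlinarith [mul_le_mul_of_nonneg_right (mul_le_mul_of_nonneg_left hI1 hp) hAc.le,
    mul_le_mul_of_nonneg_right (mul_le_mul_of_nonneg_left hE1 hq) hAc.le,
    mul_le_mul_of_nonneg_right hL hAc.le, mul_nonneg hav hAc.le]

private lemma seir_arith_E {p q av Sc Ec Ic Ac M L : ℝ} (hp : 0 ≤ p) (hq : 0 ≤ q)
    (hav : 0 ≤ av) (hM : 0 ≤ M) (hAc : 0 < Ac) (hEval : Ec = -Ac)
    (hSge : -Ac ≤ Sc) (hIge : -Ac ≤ Ic) (hS : |Sc| ≤ M) (hI : |Ic| ≤ M)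
    (hL : (p + q) * M + av + 1 ≤ L) :
    0 < p * Ic * Sc + q * Ec * Sc - av * Ec + L * Ac := by
  subst hEval
  have hIS : -(M * Ac) ≤ Ic * Sc :=
    seir_mul_aux hIge hSge (abs_le.1 hI).2 (abs_le.1 hS).2 hAc.le hM
  nlinarith [mul_le_mul_of_nonneg_left hIS hp,
    mul_le_mul_of_nonneg_right (abs_le.1 hS).2 (mul_nonneg hq hAc.le),
    mul_nonneg hav hAc.le, mul_le_mul_of_nonneg_right hL hAc.le]

private lemma seir_arith_I {p q av g Ec Ic Ac M L : ℝ} (hp : 0 ≤ p) (hq : 0 ≤ q)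
    (hav : 0 ≤ av) (hg : 0 ≤ g) (hM : 0 ≤ M) (hAc : 0 < Ac) (hIval : Ic = -Ac)
    (hEge : -Ac ≤ Ec) (hL : (p + q) * M + av + 1 ≤ L) :
    0 < av * Ec - g * Ic + L * Ac := by
  subst hIval
  nlinarith [mul_le_mul_of_nonneg_left hEge hav, mul_nonneg hg hAc.le,
    mul_le_mul_of_nonneg_right hL hAc.le,
    mul_nonneg (mul_nonneg (add_nonneg hp hq) hM) hAc.le]

private lemma seir_no_upcross {f : ℝ → ℝ} {d t₀ : ℝ} (hf : HasDerivAt f d t₀) (hd : 0 < d)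
    (ht₀ : 0 < t₀) (hft : f t₀ ≤ 0) (hpos : ∀ t, 0 ≤ t → t < t₀ → 0 < f t) : False := by
  have h1 : Tendsto (slope f t₀) (𝓝[<] t₀) (𝓝 d) := by
    have h := (hf.hasDerivWithinAt (s := Iio t₀))
    rw [hasDerivWithinAt_iff_tendsto_slope] at h
    simpa [Set.diff_singleton_eq_self (by simp : t₀ ∉ Iio t₀)] using h
  have h2 : ∀ᶠ t in 𝓝[<] t₀, 0 < slope f t₀ t :=
    h1.eventually (eventually_gt_nhds hd)
  have h3 : Ioo 0 t₀ ∈ 𝓝[<] t₀ := Ioo_mem_nhdsLT ht₀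
  have : (𝓝[<] t₀).NeBot := nhdsLT_neBot t₀
  obtain ⟨t, ht1, ht2⟩ := (h2.and (eventually_of_mem h3 (fun x hx => hx))).exists
  have hft' : 0 < f t := hpos t ht2.1.le ht2.2
  have hslope : slope f t₀ t < 0 := by
    rw [slope_def_field]
    exact div_neg_of_pos_of_neg (by linarith) (by linarith [ht2.2])
  linarith

/-- Main auxiliary lemma: nonnegativity of S, E, I on `[0, T]`. -/
private lemma seir_aux
    (S E I βi βe a γ μ : ℝ → ℝ)
    (hβi : Continuous βi) (hβe : Continuous βe) (ha : Continuous a)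
    (hβi0 : ∀ t, 0 ≤ βi t) (hβe0 : ∀ t, 0 ≤ βe t) (ha0 : ∀ t, 0 ≤ a t)
    (hγ0 : ∀ t, 0 ≤ γ t) (hμ0 : ∀ t, 0 ≤ μ t)
    (hS : ∀ t, 0 ≤ t → HasDerivAt S (-(βi t * I t * S t) - βe t * E t * S t) t)
    (hE : ∀ t, 0 ≤ t → HasDerivAt E (βi t * I t * S t + βe t * E t * S t - a t * E t) t)
    (hI : ∀ t, 0 ≤ t → HasDerivAt I (a t * E t - (γ t + μ t) * I t) t)
    (hS0 : 0 ≤ S 0) (hE0 : 0 ≤ E 0) (hI0 : 0 ≤ I 0)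
    (T : ℝ) (hT : 0 ≤ T) :
    ∀ t ∈ Icc (0:ℝ) T, 0 ≤ S t ∧ 0 ≤ E t ∧ 0 ≤ I t := by
  -- continuity of S, E, I on Icc 0 T
  have hScont : ContinuousOn S (Icc 0 T) := fun t ht => (hS t ht.1).continuousAt.continuousWithinAt
  have hEcont : ContinuousOn E (Icc 0 T) := fun t ht => (hE t ht.1).continuousAt.continuousWithinAt
  have hIcont : ContinuousOn I (Icc 0 T) := fun t ht => (hI t ht.1).continuousAt.continuousWithinAt
  -- bound M on |S|, |E|, |I|
  obtain ⟨t₀, ht₀, hMmax⟩ := isCompact_Icc.exists_isMaxOn (nonempty_Icc.2 hT)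
    (((hScont.abs.add hEcont.abs).add hIcont.abs) : ContinuousOn (fun t => |S t| + |E t| + |I t|) _)
  set M : ℝ := |S t₀| + |E t₀| + |I t₀| with hMdef
  have hM : ∀ t ∈ Icc (0:ℝ) T, |S t| ≤ M ∧ |E t| ≤ M ∧ |I t| ≤ M := by
    intro t ht
    have h' : |S t| + |E t| + |I t| ≤ M := hMmax ht
    refine ⟨?_, ?_, ?_⟩ <;>
      linarith [abs_nonneg (S t), abs_nonneg (E t), abs_nonneg (I t)]
  have hM0 : 0 ≤ M := by positivity
  -- bound L
  obtain ⟨t₁, ht₁, hLmax⟩ := isCompact_Icc.exists_isMaxOn (nonempty_Icc.2 hT)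
    ((((hβi.add hβe).mul continuous_const).add ha).continuousOn :
      ContinuousOn (fun t => (βi t + βe t) * M + a t) (Icc 0 T))
  set L : ℝ := (βi t₁ + βe t₁) * M + a t₁ + 1 with hLdef
  have hL : ∀ t ∈ Icc (0:ℝ) T, (βi t + βe t) * M + a t + 1 ≤ L := by
    intro t ht
    have h' : (βi t + βe t) * M + a t ≤ (βi t₁ + βe t₁) * M + a t₁ := hLmax ht
    simp only [hLdef]
    linarith
  -- the ε-perturbed claim
  have key : ∀ ε : ℝ, 0 < ε → ∀ t ∈ Icc (0:ℝ) T,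
      0 < S t + ε * exp (L * t) ∧ 0 < E t + ε * exp (L * t) ∧ 0 < I t + ε * exp (L * t) := by
    intro ε hε
    set A : ℝ → ℝ := fun t => ε * exp (L * t) with hAdef
    have hA : ∀ t, HasDerivAt A (L * A t) t := by
      intro t
      have h1 : HasDerivAt (fun t : ℝ => L * t) L t := by
        simpa using (hasDerivAt_id t).const_mul L
      have h2 := (h1.exp).const_mul ε
      have e : L * A t = ε * (exp (L * t) * L) := by simp only [hAdef]; ring
      rw [e]; exact h2
    have hApos : ∀ t, 0 < A t := fun t => mul_pos hε (exp_pos _)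
    have hAcont : Continuous A := by
      simp only [hAdef]
      exact continuous_const.mul ((continuous_const.mul continuous_id).rexp)
    -- bad set
    set B : Set ℝ := {t ∈ Icc (0:ℝ) T | S t + A t ≤ 0 ∨ E t + A t ≤ 0 ∨ I t + A t ≤ 0} with hBdef
    have hBsub : ∀ t ∈ B, t ∈ Icc (0:ℝ) T := fun t ht => ht.1
    have hBclosed : IsClosed B := by
      have e1 : B = (Icc (0:ℝ) T ∩ (fun t => S t + A t) ⁻¹' Iic 0)
          ∪ (Icc (0:ℝ) T ∩ (fun t => E t + A t) ⁻¹' Iic 0)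
          ∪ (Icc (0:ℝ) T ∩ (fun t => I t + A t) ⁻¹' Iic 0) := by
        ext t
        simp only [hBdef, mem_sep_iff, mem_union, mem_inter_iff, mem_preimage, mem_Iic]
        tauto
      rw [e1]
      exact (((hScont.add hAcont.continuousOn).preimage_isClosed_of_isClosed isClosed_Icc
          isClosed_Iic).union ((hEcont.add hAcont.continuousOn).preimage_isClosed_of_isClosed
          isClosed_Icc isClosed_Iic)).union
        ((hIcont.add hAcont.continuousOn).preimage_isClosed_of_isClosed isClosed_Icc isClosed_Iic)
    have hBempty : B = ∅ := by
      by_contra hne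
      have hBne : B.Nonempty := nonempty_iff_ne_empty.2 hne
      have hBbdd : BddBelow B := ⟨0, fun x hx => (hBsub x hx).1⟩
      set c : ℝ := sInf B with hcdef
      have hcB : c ∈ B := hBclosed.csInf_mem hBne hBbdd
      have hcIcc : c ∈ Icc (0:ℝ) T := hBsub c hcB
      have hc0 : 0 < c := by
        rcases hcIcc.1.lt_or_eq with h | h
        · exact h
        · exfalso
          have h0 : (0:ℝ) ∈ B := by rw [h]; exact hcB
          have hdis := h0.2
          have hA0 : A 0 = ε := by simp [hAdef]
          rcases hdis with h' | h' | h' <;> rw [hA0] at h' <;> linarith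
      have hprev : ∀ t, 0 ≤ t → t < c → 0 < S t + A t ∧ 0 < E t + A t ∧ 0 < I t + A t := by
        intro t ht htc
        have hnotB : t ∉ B := notMem_of_lt_csInf htc hBbdd
        have htIcc : t ∈ Icc (0:ℝ) T := ⟨ht, htc.le.trans hcIcc.2⟩
        simp only [hBdef, mem_sep_iff, not_and, not_or, not_le] at hnotB
        exact hnotB htIcc
      -- at c, each component is ≥ 0 by continuity from the left
      have hlim : ∀ X : ℝ → ℝ, ContinuousAt X c → (∀ t, 0 ≤ t → t < c → 0 < X t + A t) →
          0 ≤ X c + A c := by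
        intro X hXc hXpos
        have : (𝓝[<] c).NeBot := nhdsLT_neBot c
        have htend : Tendsto (fun t => X t + A t) (𝓝[<] c) (𝓝 (X c + A c)) :=
          ((hXc.add hAcont.continuousAt).tendsto).mono_left nhdsWithin_le_nhds
        refine ge_of_tendsto htend ?_
        filter_upwards [Ioo_mem_nhdsLT hc0] with t ht
        exact (hXpos t ht.1.le ht.2).le
      have hSge : 0 ≤ S c + A c :=
        hlim S (hS c hcIcc.1).continuousAt (fun t h1 h2 => (hprev t h1 h2).1)
      have hEge : 0 ≤ E c + A c :=
        hlim E (hE c hcIcc.1).continuousAt (fun t h1 h2 => (hprev t h1 h2).2.1)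
      have hIge : 0 ≤ I c + A c :=
        hlim I (hI c hcIcc.1).continuousAt (fun t h1 h2 => (hprev t h1 h2).2.2)
      obtain ⟨hSM, hEM, hIM⟩ := hM c hcIcc
      have hLc := hL c hcIcc
      have hApc := hApos c
      rcases hcB.2 with hcase | hcase | hcase
      · -- S component hits 0
        have hSval : S c = -A c := by linarith
        have hd : 0 < -(βi c * I c * S c) - βe c * E c * S c + L * A c :=
          seir_arith_S (hβi0 c) (hβe0 c) (ha0 c) hApc hSval hEM hIM hLc
        exact seir_no_upcross ((hS c hcIcc.1).add (hA c)) hd hc0 (by simp only [Pi.add_apply]; linarith)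
          (fun t h1 h2 => (hprev t h1 h2).1)
      · -- E component hits 0
        have hEval : E c = -A c := by linarith
        have hd : 0 < βi c * I c * S c + βe c * E c * S c - a c * E c + L * A c :=
          seir_arith_E (hβi0 c) (hβe0 c) (ha0 c) hM0 hApc
            hEval (by linarith) (by linarith) hSM hIM hLc
        exact seir_no_upcross ((hE c hcIcc.1).add (hA c)) hd hc0 (by simp only [Pi.add_apply]; linarith)
          (fun t h1 h2 => (hprev t h1 h2).2.1)
      · -- I component hits 0
        have hIval : I c = -A c := by linarith
        have hd : 0 < a c * E c - (γ c + μ c) * I c + L * A c :=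
          seir_arith_I (hβi0 c) (hβe0 c) (ha0 c) (add_nonneg (hγ0 c) (hμ0 c)) hM0 hApc
            hIval (by linarith) hLc
        exact seir_no_upcross ((hI c hcIcc.1).add (hA c)) hd hc0 (by simp only [Pi.add_apply]; linarith)
          (fun t h1 h2 => (hprev t h1 h2).2.2)
    -- conclude from emptiness of B
    intro t ht
    have htB : t ∉ B := by rw [hBempty]; exact notMem_empty t
    simp only [hBdef, mem_sep_iff, not_and, not_or, not_le] at htB
    exact htB ht
  -- let ε → 0
  intro t ht
  have hexp : (0:ℝ) < exp (L * t) := exp_pos _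
  have hgen : ∀ x : ℝ, (∀ ε : ℝ, 0 < ε → 0 < x + ε * exp (L * t)) → 0 ≤ x := by
    intro x hx
    by_contra hneg
    push_neg at hneg
    have h := hx (-x / (2 * exp (L * t))) (div_pos (by linarith) (by positivity))
    have he : -x / (2 * exp (L * t)) * exp (L * t) = -x / 2 := by
      field_simp
    rw [he] at h
    linarith
  exact ⟨hgen _ (fun ε hε => (key ε hε t ht).1), hgen _ (fun ε hε => (key ε hε t ht).2.1),
    hgen _ (fun ε hε => (key ε hε t ht).2.2)⟩

/-- Nonnegativity of solutions of the modified SEIR system. -/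
theorem seir_nonneg
    (S E I R βi βe a γ μ : ℝ → ℝ)
    (hβi : Continuous βi) (hβe : Continuous βe) (ha : Continuous a)
    (hγ : Continuous γ) (hμ : Continuous μ)
    (hβi0 : ∀ t, 0 ≤ βi t) (hβe0 : ∀ t, 0 ≤ βe t) (ha0 : ∀ t, 0 ≤ a t)
    (hγ0 : ∀ t, 0 ≤ γ t) (hμ0 : ∀ t, 0 ≤ μ t)
    (hS : ∀ t, 0 ≤ t → HasDerivAt S (-(βi t * I t * S t) - βe t * E t * S t) t)
    (hE : ∀ t, 0 ≤ t → HasDerivAt E (βi t * I t * S t + βe t * E t * S t - a t * E t) t)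
    (hI : ∀ t, 0 ≤ t → HasDerivAt I (a t * E t - (γ t + μ t) * I t) t)
    (hR : ∀ t, 0 ≤ t → HasDerivAt R (γ t * I t) t)
    (hS0 : 0 ≤ S 0) (hE0 : 0 ≤ E 0) (hI0 : 0 ≤ I 0) (hR0 : 0 ≤ R 0) :
    ∀ t, 0 ≤ t → 0 ≤ S t ∧ 0 ≤ E t ∧ 0 ≤ I t ∧ 0 ≤ R t := by
  intro t ht
  have haux := seir_aux S E I βi βe a γ μ hβi hβe ha hβi0 hβe0 ha0 hγ0 hμ0
    hS hE hI hS0 hE0 hI0 t ht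
  obtain ⟨h1, h2, h3⟩ := haux t ⟨ht, le_refl t⟩
  refine ⟨h1, h2, h3, ?_⟩
  -- R is monotone since R' = γ I ≥ 0
  have hmono : MonotoneOn R (Icc 0 t) := by
    apply monotoneOn_of_deriv_nonneg (convex_Icc 0 t)
    · exact fun s hs => (hR s hs.1).continuousAt.continuousWithinAt
    · intro s hs
      rw [interior_Icc] at hs
      exact ((hR s hs.1.le).differentiableAt).differentiableWithinAt
    · intro s hs
      rw [interior_Icc] at hs
      rw [(hR s hs.1.le).deriv]
      exact mul_nonneg (hγ0 s) ((haux s ⟨hs.1.le, hs.2.le⟩).2.2)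
  have := hmono ⟨le_refl 0, ht⟩ ⟨ht, le_refl t⟩ ht
  linarith
end

section
/- Suppose (S,E,I,R) is a nonnegative solution of the modified SEIR system such that S(t) → S_c > 0 as t → ∞, where the parameters βᵢ, βₑ are continuous functions bounded below by a positive constant. Then ∫₀^∞ (βᵢ(s)I(s) + βₑ(s)E(s)) ds < ∞. In particular, liminf_{t→∞} I(t) = 0 and liminf_{t→∞} E(t) = 0. -/
open Filter MeasureTheory

/-- A nonnegative (on `[0,∞)`) integrable function has vanishing liminf at infinity. -/
lemma aux_liminf_zero (f : ℝ → ℝ) (hf : ∀ t, 0 ≤ t → 0 ≤ f t)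
    (hint : MeasureTheory.IntegrableOn f (Set.Ici (0:ℝ))) :
    liminf f atTop = 0 := by
  set M : ℝ := ∫ x in Set.Ici (0:ℝ), f x with hM
  have hfreq : ∀ ε : ℝ, 0 < ε → ∃ᶠ t in atTop, f t ≤ ε := by
    intro ε hε
    by_contra h
    rw [not_frequently] at h
    simp only [not_le] at h
    obtain ⟨T, hT⟩ := (eventually_atTop).1 h
    set T' : ℝ := max T 0 with hT'
    have hT'0 : (0:ℝ) ≤ T' := le_max_right _ _
    set x : ℝ := T' + (|M| + 1) / ε with hx
    have hxgt : T' ≤ x := by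
      rw [hx]
      exact le_add_of_nonneg_right (by positivity)
    have hsub : Set.Ioc T' x ⊆ Set.Ici (0:ℝ) := fun y hy => le_trans hT'0 (le_of_lt hy.1)
    have hintsub : MeasureTheory.IntegrableOn f (Set.Ioc T' x) := hint.mono_set hsub
    have hlow : ∫ y in Set.Ioc T' x, (ε : ℝ) ≤ ∫ y in Set.Ioc T' x, f y := by
      refine MeasureTheory.setIntegral_mono_on (MeasureTheory.integrableOn_const ?_)
        hintsub measurableSet_Ioc ?_
      · rw [Real.volume_Ioc]; exact ENNReal.ofReal_ne_top
      · intro y hy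
        exact le_of_lt (hT y (le_trans (le_max_left _ _) (le_of_lt hy.1)))
    have hconst : ∫ y in Set.Ioc T' x, (ε : ℝ) = (x - T') * ε := by
      rw [MeasureTheory.setIntegral_const, measureReal_def, Real.volume_Ioc, smul_eq_mul,
        ENNReal.toReal_ofReal (by linarith)]
    have hup : ∫ y in Set.Ioc T' x, f y ≤ M := by
      refine MeasureTheory.setIntegral_mono_set hint ?_ (HasSubset.Subset.eventuallyLE hsub)
      refine (MeasureTheory.ae_restrict_iff' measurableSet_Ici).2 ?_
      exact Eventually.of_forall (fun y hy => hf y hy)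
    have hxT : x - T' = (|M| + 1) / ε := by rw [hx]; ring
    have : (|M| + 1) ≤ M := by
      have := hlow.trans hup
      rw [hconst, hxT, div_mul_cancel₀ _ (ne_of_gt hε)] at this
      exact this
    have hMle : M ≤ |M| := le_abs_self M
    linarith
  have hbdd : IsBoundedUnder (· ≥ ·) atTop f := by
    refine isBoundedUnder_of_eventually_ge (a := (0:ℝ)) ?_
    filter_upwards [eventually_ge_atTop (0:ℝ)] with t ht
    exact hf t ht
  have hcobdd : IsCoboundedUnder (· ≥ ·) atTop f :=
    IsCoboundedUnder.of_frequently_le (hfreq 1 one_pos)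
  have h1 : liminf f atTop ≤ 0 := by
    by_contra h
    push_neg at h
    have := liminf_le_of_frequently_le (hfreq (liminf f atTop / 2) (by linarith)) hbdd
    linarith
  have h2 : 0 ≤ liminf f atTop := by
    refine le_liminf_of_le hcobdd ?_
    filter_upwards [eventually_ge_atTop (0:ℝ)] with t ht
    exact hf t ht
  linarith

/-- If `S` converges to a positive limit, the total infection pressure is integrable,
and both `I` and `E` have vanishing liminf. -/
theorem seir_positive_limit_integrable
    (S E I βi βe : ℝ → ℝ) (Sc β₀ : ℝ)
    (hβi : Continuous βi) (hβe : Continuous βe)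
    (hβ₀ : 0 < β₀) (hβil : ∀ t, β₀ ≤ βi t) (hβel : ∀ t, β₀ ≤ βe t)
    (hSn : ∀ t, 0 ≤ t → 0 ≤ S t) (hEn : ∀ t, 0 ≤ t → 0 ≤ E t)
    (hIn : ∀ t, 0 ≤ t → 0 ≤ I t)
    (hE : Continuous E) (hI : Continuous I)
    (hS : ∀ t, 0 ≤ t → HasDerivAt S (-(βi t * I t + βe t * E t) * S t) t)
    (hlim : Tendsto S atTop (nhds Sc)) (hSc : 0 < Sc) :
    MeasureTheory.IntegrableOn (fun s => βi s * I s + βe s * E s) (Set.Ici (0:ℝ)) ∧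
      liminf I atTop = 0 ∧ liminf E atTop = 0 := by
  set f : ℝ → ℝ := fun s => βi s * I s + βe s * E s with hf
  have hfc : Continuous f := ((hβi.mul hI).add (hβe.mul hE))
  have hfn : ∀ t, 0 ≤ t → 0 ≤ f t := by
    intro t ht
    have h1 : 0 ≤ βi t * I t :=
      mul_nonneg (le_trans (le_of_lt hβ₀) (hβil t)) (hIn t ht)
    have h2 : 0 ≤ βe t * E t :=
      mul_nonneg (le_trans (le_of_lt hβ₀) (hβel t)) (hEn t ht)
    exact add_nonneg h1 h2
  -- S is antitone on [0, ∞)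
  have hScont : ContinuousOn S (Set.Ici 0) := fun t ht =>
    ((hS t ht).continuousAt).continuousWithinAt
  have hintIci : interior (Set.Ici (0:ℝ)) = Set.Ioi 0 := interior_Ici
  have hanti : AntitoneOn S (Set.Ici (0:ℝ)) := by
    refine antitoneOn_of_deriv_nonpos (convex_Ici 0) hScont ?_ ?_
    · rw [hintIci]
      exact fun t ht => ((hS t (le_of_lt ht)).differentiableAt).differentiableWithinAt
    · rw [hintIci]
      intro t ht
      rw [(hS t (le_of_lt ht)).deriv]
      have h0 : (0:ℝ) ≤ βi t * I t + βe t * E t := hfn t (le_of_lt ht)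
      have h1 := hSn t (le_of_lt ht)
      nlinarith
  -- S t ≥ Sc for t ≥ 0
  have hSlb : ∀ t, 0 ≤ t → Sc ≤ S t := by
    intro t ht
    refine le_of_tendsto hlim ?_
    filter_upwards [eventually_ge_atTop t] with u hu
    exact hanti ht (le_trans ht hu) hu
  have hSpos : ∀ t, 0 ≤ t → 0 < S t := fun t ht => lt_of_lt_of_le hSc (hSlb t ht)
  -- derivative of -log ∘ S
  have hlogderiv : ∀ t, 0 ≤ t →
      HasDerivAt (fun u => -Real.log (S u)) (f t) t := by
    intro t ht
    have h1 : HasDerivAt (fun u => Real.log (S u)) ((S t)⁻¹ * (-(f t) * S t)) t :=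
      (Real.hasDerivAt_log (ne_of_gt (hSpos t ht))).comp t (hS t ht)
    have h2 : (S t)⁻¹ * (-(f t) * S t) = -(f t) := by
      rw [mul_comm, mul_assoc, mul_inv_cancel₀ (ne_of_gt (hSpos t ht)), mul_one]
    rw [h2] at h1
    have h3 := h1.neg; rw [neg_neg] at h3; exact h3
  -- bound on interval integrals
  have hbound : ∀ x : ℝ, 0 ≤ x →
      (∫ s in (0:ℝ)..x, f s) = Real.log (S 0) - Real.log (S x) := by
    intro x hx
    have : (∫ s in (0:ℝ)..x, f s) = (fun u => -Real.log (S u)) x -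
        (fun u => -Real.log (S u)) 0 := by
      refine intervalIntegral.integral_eq_sub_of_hasDerivAt
        (f := fun u => -Real.log (S u)) (f' := f) ?_ ?_
      · intro t ht
        rw [Set.uIcc_of_le hx] at ht
        exact hlogderiv t ht.1
      · exact (hfc.intervalIntegrable 0 x)
    rw [this]; ring
  set M : ℝ := Real.log (S 0) - Real.log Sc with hMdef
  have hbound2 : ∀ x : ℝ, 0 ≤ x → (∫ s in (0:ℝ)..x, ‖f s‖) ≤ M := by
    intro x hx
    have heq : (∫ s in (0:ℝ)..x, ‖f s‖) = ∫ s in (0:ℝ)..x, f s := by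
      refine intervalIntegral.integral_congr ?_
      intro t ht
      rw [Set.uIcc_of_le hx] at ht
      exact Real.norm_of_nonneg (hfn t ht.1)
    rw [heq, hbound x hx, hMdef]
    have : Real.log Sc ≤ Real.log (S x) :=
      Real.log_le_log hSc (hSlb x hx)
    linarith
  have hIoi : MeasureTheory.IntegrableOn f (Set.Ioi (0:ℝ)) := by
    refine MeasureTheory.integrableOn_Ioi_of_intervalIntegral_norm_bounded
      (b := fun x : ℝ => x) (l := atTop) M 0 ?_ tendsto_id ?_
    · intro i
      exact hfc.integrableOn_Ioc
    · filter_upwards [eventually_ge_atTop (0:ℝ)] with x hx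
      exact hbound2 x hx
  have hfint : MeasureTheory.IntegrableOn f (Set.Ici (0:ℝ)) :=
    (integrableOn_Ici_iff_integrableOn_Ioi).2 hIoi
  refine ⟨hfint, ?_, ?_⟩
  · -- liminf I = 0
    have hIint : MeasureTheory.IntegrableOn I (Set.Ici (0:ℝ)) := by
      have h1 : MeasureTheory.IntegrableOn (fun s => (1/β₀) * f s) (Set.Ici (0:ℝ)) :=
        hfint.const_mul _
      refine MeasureTheory.Integrable.mono h1 hI.aestronglyMeasurable.restrict ?_
      refine (MeasureTheory.ae_restrict_iff' measurableSet_Ici).2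
        (Eventually.of_forall fun t ht => ?_)
      have hfnt := hfn t ht
      have h2 : β₀ * I t ≤ f t := by
        have hIt := hIn t ht
        have hEt := hEn t ht
        have : β₀ * I t ≤ βi t * I t := mul_le_mul_of_nonneg_right (hβil t) hIt
        have he : 0 ≤ βe t * E t :=
          mul_nonneg (le_trans (le_of_lt hβ₀) (hβel t)) hEt
        simp only [hf]; linarith
      rw [Real.norm_of_nonneg (hIn t ht),
        Real.norm_of_nonneg (mul_nonneg (by positivity) hfnt)]
      have h3 := mul_le_mul_of_nonneg_left h2 (le_of_lt (inv_pos.2 hβ₀))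
      rw [← mul_assoc, inv_mul_cancel₀ (ne_of_gt hβ₀), one_mul] at h3
      calc I t ≤ β₀⁻¹ * f t := h3
        _ = 1 / β₀ * f t := by rw [one_div]
    exact aux_liminf_zero I hIn hIint
  · -- liminf E = 0
    have hEint : MeasureTheory.IntegrableOn E (Set.Ici (0:ℝ)) := by
      have h1 : MeasureTheory.IntegrableOn (fun s => (1/β₀) * f s) (Set.Ici (0:ℝ)) :=
        hfint.const_mul _
      refine MeasureTheory.Integrable.mono h1 hE.aestronglyMeasurable.restrict ?_
      refine (MeasureTheory.ae_restrict_iff' measurableSet_Ici).2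
        (Eventually.of_forall fun t ht => ?_)
      have hfnt := hfn t ht
      have h2 : β₀ * E t ≤ f t := by
        have hIt := hIn t ht
        have hEt := hEn t ht
        have : β₀ * E t ≤ βe t * E t := mul_le_mul_of_nonneg_right (hβel t) hEt
        have hi : 0 ≤ βi t * I t :=
          mul_nonneg (le_trans (le_of_lt hβ₀) (hβil t)) hIt
        simp only [hf]; linarith
      rw [Real.norm_of_nonneg (hEn t ht),
        Real.norm_of_nonneg (mul_nonneg (by positivity) hfnt)]
      have h3 := mul_le_mul_of_nonneg_left h2 (le_of_lt (inv_pos.2 hβ₀))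
      rw [← mul_assoc, inv_mul_cancel₀ (ne_of_gt hβ₀), one_mul] at h3
      calc E t ≤ β₀⁻¹ * f t := h3
        _ = 1 / β₀ * f t := by rw [one_div]
    exact aux_liminf_zero E hEn hEint
end

section
/- Let (S,E,I,R) be a nonnegative solution of the modified SEIR system with a, γ, μ positive constants and βᵢ, βₑ positive continuous functions, and suppose E and I are not both identically zero. If at a time t₀ we have I'(t₀) = 0 and S(t₀) < a(γ+μ)/(aβᵢ(t₀) + (γ+μ)βₑ(t₀)), then I''(t₀) < 0; i.e. every critical point of I occurring where S is below this threshold is a strict local maximum. -/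
/-- A critical point of `I` where `S` lies below the threshold is a strict local maximum:
the second derivative of `I` there is negative. -/
theorem seir_critical_point_is_max
    (S E I R βi βe : ℝ → ℝ) (a γ μ : ℝ) (t₀ : ℝ)
    (ha : 0 < a) (hγ : 0 < γ) (hμ : 0 < μ)
    (hβi : Continuous βi) (hβe : Continuous βe)
    (hβip : ∀ t, 0 < βi t) (hβep : ∀ t, 0 < βe t)
    (hSn : ∀ t, 0 ≤ S t) (hEn : ∀ t, 0 ≤ E t) (hIn : ∀ t, 0 ≤ I t)
    (hS : ∀ t, HasDerivAt S (-(βi t * I t * S t) - βe t * E t * S t) t)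
    (hE : ∀ t, HasDerivAt E (βi t * I t * S t + βe t * E t * S t - a * E t) t)
    (hI : ∀ t, HasDerivAt I (a * E t - (γ + μ) * I t) t)
    (hR : ∀ t, HasDerivAt R (γ * I t) t)
    (hEpos : 0 < E t₀)
    (hcrit : deriv I t₀ = 0)
    (hthresh : S t₀ < a * (γ + μ) / (a * βi t₀ + (γ + μ) * βe t₀)) :
    deriv (deriv I) t₀ < 0 := by
  have hγμ : 0 < γ + μ := by linarith
  have hderivI : deriv I = fun t => a * E t - (γ + μ) * I t := by
    funext t; exact (hI t).deriv
  -- value of I at t₀ from criticality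
  have hIval : a * E t₀ = (γ + μ) * I t₀ := by
    have := hcrit; rw [hderivI] at this; simp only [] at this; linarith
  -- second derivative
  have hI2 : HasDerivAt (deriv I)
      (a * (βi t₀ * I t₀ * S t₀ + βe t₀ * E t₀ * S t₀ - a * E t₀)
        - (γ + μ) * (a * E t₀ - (γ + μ) * I t₀)) t₀ := by
    rw [hderivI]
    exact ((hE t₀).const_mul a).sub ((hI t₀).const_mul (γ + μ))
  have h2 := hI2.deriv
  rw [h2]
  have hI0 : I t₀ = a * E t₀ / (γ + μ) := by field_simp; linarith
  have hden : 0 < a * βi t₀ + (γ + μ) * βe t₀ := by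
    have := hβip t₀; have := hβep t₀; positivity
  have hS' : S t₀ * (a * βi t₀ + (γ + μ) * βe t₀) < a * (γ + μ) := by
    have := (lt_div_iff₀ hden).mp hthresh
    linarith
  -- E'(t₀) < 0
  have hE' : βi t₀ * I t₀ * S t₀ + βe t₀ * E t₀ * S t₀ - a * E t₀ < 0 := by
    rw [hI0]
    have key : βi t₀ * (a * E t₀ / (γ + μ)) * S t₀ + βe t₀ * E t₀ * S t₀ - a * E t₀
        = E t₀ * (S t₀ * (a * βi t₀ + (γ + μ) * βe t₀) - a * (γ + μ)) / (γ + μ) := by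
      field_simp
    rw [key]
    apply div_neg_of_neg_of_pos _ hγμ
    have : S t₀ * (a * βi t₀ + (γ + μ) * βe t₀) - a * (γ + μ) < 0 := by linarith
    exact mul_neg_of_pos_of_neg hEpos this
  have hzero : a * E t₀ - (γ + μ) * I t₀ = 0 := by linarith
  rw [hzero, mul_zero, sub_zero]
  exact mul_neg_of_pos_of_neg ha hE'
end

section
/- Let (S,E,A,I,R) be a nonnegative solution of the SEIAR system with positive constants aₐ, aᵢ, γₐ, γᵢ, μ satisfying γₐ ≥ γᵢ + μ, and suppose aᵢA(0) ≤ aₐI(0). Then aᵢA(t) ≤ aₐI(t) for all t ≥ 0; i.e. A(t) ≤ (aₐ/aᵢ)I(t). -/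
/-- Comparison lemma: if `γₐ ≥ γᵢ + μ` and `aᵢA(0) ≤ aₐI(0)`, then `aᵢA(t) ≤ aₐI(t)`
for all `t ≥ 0`. -/
theorem seiar_comparison_A_I
    (E A I : ℝ → ℝ) (ai aa γi γa μ : ℝ)
    (hai : 0 < ai) (haa : 0 < aa) (hγi : 0 < γi) (hγa : 0 < γa) (hμ : 0 < μ)
    (hγ : γi + μ ≤ γa)
    (hEn : ∀ t, 0 ≤ t → 0 ≤ E t) (hIn : ∀ t, 0 ≤ t → 0 ≤ I t)
    (hA : ∀ t, 0 ≤ t → HasDerivAt A (aa * E t - γa * A t) t)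
    (hI : ∀ t, 0 ≤ t → HasDerivAt I (ai * E t - (γi + μ) * I t) t)
    (h0 : ai * A 0 ≤ aa * I 0) :
    ∀ t, 0 ≤ t → ai * A t ≤ aa * I t := by
  set f : ℝ → ℝ := fun t => (aa * I t - ai * A t) * Real.exp (γa * t) with hf
  have hderiv : ∀ t, 0 ≤ t →
      HasDerivAt f (aa * (γa - (γi + μ)) * I t * Real.exp (γa * t)) t := by
    intro t ht
    have hexp : HasDerivAt (fun t => Real.exp (γa * t)) (γa * Real.exp (γa * t)) t := by
      have := (Real.hasDerivAt_exp (γa * t)).comp t ((hasDerivAt_id t).const_mul γa)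
      simpa [mul_comm, Function.comp_def] using this
    have hw : HasDerivAt (fun t => aa * I t - ai * A t)
        (aa * (ai * E t - (γi + μ) * I t) - ai * (aa * E t - γa * A t)) t :=
      ((hI t ht).const_mul aa).sub ((hA t ht).const_mul ai)
    have : HasDerivAt (fun y => (aa * I y - ai * A y) * Real.exp (γa * y)) _ t := hw.mul hexp
    convert this using 1
    ring
  have hmono : MonotoneOn f (Set.Ici (0:ℝ)) := by
    apply monotoneOn_of_deriv_nonneg (convex_Ici 0)
    · intro t ht
      exact (hderiv t ht).continuousAt.continuousWithinAt
    · intro t ht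
      rw [interior_Ici] at ht
      exact (hderiv t (le_of_lt ht)).differentiableAt.differentiableWithinAt
    · intro t ht
      rw [interior_Ici] at ht
      rw [(hderiv t (le_of_lt ht)).deriv]
      have h1 : 0 ≤ aa * (γa - (γi + μ)) := by nlinarith
      have h2 := hIn t (le_of_lt ht)
      positivity
  intro t ht
  have h1 : f 0 ≤ f t := hmono Set.self_mem_Ici ht ht
  have h2 : f 0 = aa * I 0 - ai * A 0 := by simp [hf]
  have h3 : 0 ≤ (aa * I t - ai * A t) * Real.exp (γa * t) := by
    have : 0 ≤ f 0 := by rw [h2]; linarith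
    exact this.trans h1
  nlinarith [Real.exp_pos (γa * t), h3]
end
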